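/- Suppose (f,g) is a Chu transform witnessing (L,⊨,S) ≤ (L',⊨',S'), where both logics are closed under negation and binary conjunction with Tarski truth conditions (s ⊨ ¬φ iff not s ⊨ φ; s ⊨ φ∧ψ iff s ⊨ φ and s ⊨ ψ, and similarly for ⊨'). Then for every φ ∈ L, f(¬φ) is L'-equivalent to ¬f(φ) (i.e., for all s' ∈ S', s' ⊨' f(¬φ) iff s' ⊨' ¬f(φ)), and for all φ,ψ ∈ L, f(φ∧ψ) is L'-equivalent to f(φ)∧f(ψ). -/
import Mathlib

universe u

/-- If `(f,g)` is a Chu transform witnessing `(L,⊨,S) ≤ (L',⊨',S')` (adjointness plus density),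
and both logics have negation and binary conjunction obeying the Tarski truth conditions,
then `f` commutes with negation and conjunction up to `L'`-equivalence. -/
theorem chu_preserves_neg_and_conj
    {L S L' S' : Type u} (sat : S → L → Prop) (sat' : S' → L' → Prop)
    (f : L → L') (g : S' → S)
    (hadj : ∀ (φ : L) (s' : S'), sat' s' (f φ) ↔ sat (g s') φ)
    (hdense : ∀ φ : L, (∃ s, sat s φ) → ∃ s', sat (g s') φ)
    (negL : L → L) (negL' : L' → L')
    (conjL : L → L → L) (conjL' : L' → L' → L')
    (hnegL : ∀ (s : S) (φ : L), sat s (negL φ) ↔ ¬ sat s φ)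
    (hnegL' : ∀ (s' : S') (φ' : L'), sat' s' (negL' φ') ↔ ¬ sat' s' φ')
    (hconjL : ∀ (s : S) (φ ψ : L), sat s (conjL φ ψ) ↔ sat s φ ∧ sat s ψ)
    (hconjL' : ∀ (s' : S') (φ' ψ' : L'), sat' s' (conjL' φ' ψ') ↔ sat' s' φ' ∧ sat' s' ψ') :
    (∀ (φ : L) (s' : S'), sat' s' (f (negL φ)) ↔ sat' s' (negL' (f φ))) ∧
    (∀ (φ ψ : L) (s' : S'), sat' s' (f (conjL φ ψ)) ↔ sat' s' (conjL' (f φ) (f ψ))) := by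
  constructor
  · intro φ s'
    rw [hadj, hnegL, hnegL', hadj]
  · intro φ ψ s'
    rw [hadj, hconjL, hconjL', hadj, hadj]
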